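/- arXiv:2006.09160 — 4 statements merged into one kernel-verified Lean document; each statement's English description precedes it below -/
import Mathlib

section
/- Let G be a connected claw-free graph (a graph with no induced subgraph isomorphic to K_{1,3}), and let S be a minimal vertex separator of G (i.e., S is a set of vertices such that G - S is disconnected, and no proper subset of S has this property). Then G - S has exactly two connected components. -/
open SimpleGraph

universe u

/-- The claw `K_{1,3}`, with centre `0`. -/
def claw : SimpleGraph (Fin 4) := SimpleGraph.fromRel (fun a _ => a = 0)

/-- The bull: triangle `0 1 2` with horns `3` (adjacent to `0`) and `4` (adjacent to `1`). -/
def bull : SimpleGraph (Fin 5) := SimpleGraph.fromRel (fun a b =>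
  (a = 0 ∧ b = 1) ∨ (a = 0 ∧ b = 2) ∨ (a = 1 ∧ b = 2) ∨ (a = 3 ∧ b = 0) ∨ (a = 4 ∧ b = 1))

/-- The net: triangle `0 1 2` with pendant vertices `3`, `4`, `5` attached to `0`, `1`, `2`. -/
def net : SimpleGraph (Fin 6) := SimpleGraph.fromRel (fun a b =>
  (a = 0 ∧ b = 1) ∨ (a = 0 ∧ b = 2) ∨ (a = 1 ∧ b = 2) ∨
  (a = 3 ∧ b = 0) ∨ (a = 4 ∧ b = 1) ∨ (a = 5 ∧ b = 2))

/-- `S` is a vertex separator of `G`: deleting `S` leaves a disconnected graph. -/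
def IsSeparator {V : Type u} (G : SimpleGraph V) (S : Set V) : Prop :=
  ¬ (G.induce (Sᶜ : Set V)).Preconnected

/-- `S` is a minimal vertex separator of `G`. -/
def IsMinSeparator {V : Type u} (G : SimpleGraph V) (S : Set V) : Prop :=
  IsSeparator G S ∧ ∀ T : Set V, T ⊂ S → ¬ IsSeparator G T

/-- A ray (one-way infinite path) in `G`. -/
def IsRay {V : Type u} (G : SimpleGraph V) (f : ℕ → V) : Prop :=
  Function.Injective f ∧ ∀ n, G.Adj (f n) (f (n + 1))

/-- A double ray (two-way infinite path) in `G`. -/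
def IsDoubleRay {V : Type u} (G : SimpleGraph V) (f : ℤ → V) : Prop :=
  Function.Injective f ∧ ∀ n : ℤ, G.Adj (f n) (f (n + 1))

/-- The vertex set of the component `c` of `G - v`, together with `v` itself. -/
def compSet {V : Type u} (G : SimpleGraph V) (v : V)
    (c : (G.induce {x | x ≠ v}).ConnectedComponent) : Set V :=
  insert v {x : V | ∃ h : x ≠ v, (G.induce {x | x ≠ v}).connectedComponentMk ⟨x, h⟩ = c}

/-- `G` is distance-2-complete centered at `v`: `G - v` has exactly two connected components,
and in each component `C` and for each `i`, the vertices at distance `i` from `v` in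
`G[V(C) ∪ {v}]` induce a complete graph. -/
def DistanceTwoComplete {V : Type u} (G : SimpleGraph V) (v : V) : Prop :=
  (∃ c₁ c₂ : (G.induce {x | x ≠ v}).ConnectedComponent, c₁ ≠ c₂ ∧ ∀ c, c = c₁ ∨ c = c₂) ∧
  ∀ c : (G.induce {x | x ≠ v}).ConnectedComponent, ∀ i : ℕ, ∀ x y : V,
    ∀ hx : x ∈ compSet G v c, ∀ hy : y ∈ compSet G v c, x ≠ y →
    (G.induce (compSet G v c)).dist ⟨v, Set.mem_insert v _⟩ ⟨x, hx⟩ = i →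
    (G.induce (compSet G v c)).dist ⟨v, Set.mem_insert v _⟩ ⟨y, hy⟩ = i →
    G.Adj x y

/-- The ray `f` converges to the end `e` of `G`: for every finite vertex set `K`, a tail of the
ray lies in the component of `G - K` corresponding to `e`. -/
def RayTo {V : Type u} (G : SimpleGraph V) (f : ℕ → V) (e : G.end) : Prop :=
  ∀ K : Finset V, ∃ N : ℕ, ∀ n, N ≤ n →
    ∃ h : f n ∉ (K : Set V), G.componentComplMk h = e.val (Opposite.op K)

/-- The distance class: vertices of `R` at distance exactly `n` from `v` in `G[R ∪ {v}]`. -/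
def distClass {V : Type u} (G : SimpleGraph V) (v : V) (R : Set V) (n : ℕ) : Set V :=
  {x : V | x ∈ R ∧ ∃ h : x ∈ insert v R,
    (G.induce (insert v R)).dist ⟨v, Set.mem_insert v R⟩ ⟨x, h⟩ = n}

lemma walk_in {V : Type u} (G : SimpleGraph V) (A : Set V) :
    ∀ {u v : V} (p : G.Walk u v), (∀ w ∈ p.support, w ∈ A) →
    ∀ (hu : u ∈ A) (hv : v ∈ A), (G.induce A).Reachable ⟨u, hu⟩ ⟨v, hv⟩ := by
  intro u v p
  induction p with
  | nil => intro _ hu hv; rfl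
  | @cons u u' v h q ih =>
    intro hp hu hv
    have hu' : u' ∈ A := hp u' (by simp)
    have hadj : (G.induce A).Adj ⟨u, hu⟩ ⟨u', hu'⟩ := h
    exact hadj.reachable.trans (ih (fun w hw => hp w (by simp [hw])) hu' hv)

lemma walk_out {V : Type u} {G : SimpleGraph V} {A : Set V} {u v : ↥A}
    (h : (G.induce A).Reachable u v) :
    ∃ p : G.Walk ↑u ↑v, ∀ w ∈ p.support, w ∈ A := by
  obtain ⟨p⟩ := h
  refine ⟨p.map (Embedding.induce A).toHom, ?_⟩
  intro w hw
  change w ∈ (Walk.map (Embedding.induce A).toHom p).support at hw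
  rw [Walk.support_map] at hw
  obtain ⟨x, _, rfl⟩ := List.mem_map.mp hw
  exact x.2

lemma key {V : Type u} (G : SimpleGraph V) (S : Set V)
    (hmin : ∀ T : Set V, T ⊂ S → ¬ IsSeparator G T) {s : V} (hs : s ∈ S) (x : ↥(Sᶜ : Set V)) :
    ∃ y : ↥(Sᶜ : Set V), G.Adj s ↑y ∧ (G.induce (Sᶜ : Set V)).Reachable y x := by
  classical
  set T : Set V := S \ {s} with hT
  have hTS : T ⊂ S := Set.sdiff_singleton_ssubset.mpr hs
  have hpre : (G.induce (Tᶜ : Set V)).Preconnected := by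
    have := hmin T hTS
    rwa [IsSeparator, not_not] at this
  have hsT : s ∈ Tᶜ := by simp [hT]
  have hxT : (x : V) ∈ Tᶜ := by
    have := x.2
    simp only [Set.mem_compl_iff] at this ⊢
    simp [hT]
    intro h; exact absurd h this
  obtain ⟨p, hp⟩ := walk_out (hpre ⟨s, hsT⟩ ⟨↑x, hxT⟩)
  clear hpre
  -- strong induction on length of p
  suffices H : ∀ n : ℕ, ∀ p : G.Walk s ↑x, p.length ≤ n → (∀ w ∈ p.support, w ∈ Tᶜ) →
      ∃ y : ↥(Sᶜ : Set V), G.Adj s ↑y ∧ (G.induce (Sᶜ : Set V)).Reachable y x by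
    exact H p.length p le_rfl hp
  intro n
  induction n with
  | zero =>
    intro p hl _
    cases p with
    | nil => exact absurd hs x.2
    | cons h q => simp at hl
  | succ n ih =>
    intro p hl hsup
    cases p with
    | nil => exact absurd hs x.2
    | @cons _ u _ h q =>
      have huT : u ∈ Tᶜ := hsup u (by simp)
      have huS : u ∈ (Sᶜ : Set V) := by
        simp only [hT, Set.mem_compl_iff, Set.mem_diff, Set.mem_singleton_iff, not_and, not_not] at huT
        intro huS'
        exact h.ne (huT huS').symm
      by_cases hsq : s ∈ q.support
      · exact ih (q.dropUntil s hsq)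
          (by have := q.length_dropUntil_le hsq; simp at hl; omega)
          (fun w hw => hsup w (by simp [q.support_dropUntil_subset hsq hw]))
      · refine ⟨⟨u, huS⟩, h, ?_⟩
        apply walk_in G (Sᶜ : Set V) q
        intro w hw
        have hwT : w ∈ Tᶜ := hsup w (by simp [hw])
        have hws : w ≠ s := fun he => hsq (he ▸ hw)
        simp only [hT, Set.mem_compl_iff, Set.mem_diff, Set.mem_singleton_iff, not_and, not_not] at hwT
        intro hwS
        exact hws (hwT hwS)

theorem stmt0 {V : Type u} (G : SimpleGraph V) (hconn : G.Connected)
    (hclaw : IsEmpty (claw ↪g G)) (S : Set V) (hS : IsMinSeparator G S) :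
    ∃ c₁ c₂ : (G.induce (Sᶜ : Set V)).ConnectedComponent,
      c₁ ≠ c₂ ∧ ∀ c, c = c₁ ∨ c = c₂ := by
  obtain ⟨hsep, hmin⟩ := hS
  have hSne : S.Nonempty := by
    by_contra hne
    rw [Set.not_nonempty_iff_eq_empty] at hne
    subst hne
    apply hsep
    intro u v
    obtain ⟨p⟩ := hconn.preconnected ↑u ↑v
    exact walk_in G _ p (fun w _ => by simp) u.2 v.2
  obtain ⟨s, hs⟩ := hSne
  rw [IsSeparator, SimpleGraph.Preconnected] at hsep
  push_neg at hsep
  obtain ⟨x, y, hxy⟩ := hsep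
  set H := G.induce (Sᶜ : Set V) with hH
  refine ⟨H.connectedComponentMk x, H.connectedComponentMk y, ?_, ?_⟩
  · intro h
    exact hxy (ConnectedComponent.exact h)
  · intro c
    by_contra hc
    push_neg at hc
    obtain ⟨hc1, hc2⟩ := hc
    obtain ⟨z, rfl⟩ := c.exists_rep
    obtain ⟨a, haa, hra⟩ := key G S hmin hs x
    obtain ⟨b, hab, hrb⟩ := key G S hmin hs y
    obtain ⟨d, had, hrd⟩ := key G S hmin hs z
    have hca : H.connectedComponentMk a = H.connectedComponentMk x :=
      ConnectedComponent.sound hra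
    have hcb : H.connectedComponentMk b = H.connectedComponentMk y :=
      ConnectedComponent.sound hrb
    have hcd : H.connectedComponentMk d = H.connectedComponentMk z :=
      ConnectedComponent.sound hrd
    -- pairwise different components
    have hxyc : H.connectedComponentMk x ≠ H.connectedComponentMk y :=
      fun h => hxy (ConnectedComponent.exact h)
    have hab_ne : (a : V) ≠ b := by
      intro h
      exact hxyc (hca ▸ hcb ▸ (congrArg H.connectedComponentMk (Subtype.ext h)))
    have had_ne : (a : V) ≠ d := by
      intro h
      exact hc1 ((hcd ▸ hca ▸ (congrArg H.connectedComponentMk (Subtype.ext h))).symm)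
    have hbd_ne : (b : V) ≠ d := by
      intro h
      exact hc2 ((hcd ▸ hcb ▸ (congrArg H.connectedComponentMk (Subtype.ext h))).symm)
    -- pairwise non-adjacent
    have hnab : ¬ G.Adj ↑a ↑b := by
      intro h
      have : H.Adj a b := h
      exact hxyc (hca ▸ hcb ▸ ConnectedComponent.sound this.reachable)
    have hnad : ¬ G.Adj ↑a ↑d := by
      intro h
      have : H.Adj a d := h
      exact hc1 ((hcd ▸ hca ▸ ConnectedComponent.sound this.reachable).symm)
    have hnbd : ¬ G.Adj ↑b ↑d := by
      intro h
      have : H.Adj b d := h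
      exact hc2 ((hcd ▸ hcb ▸ ConnectedComponent.sound this.reachable).symm)
    have hsa : s ≠ ↑a := fun h => a.2 (h ▸ hs)
    have hsb : s ≠ ↑b := fun h => b.2 (h ▸ hs)
    have hsd : s ≠ ↑d := fun h => d.2 (h ▸ hs)
    refine hclaw.false ⟨⟨![s, ↑a, ↑b, ↑d], ?_⟩, ?_⟩
    · intro i j hij
      fin_cases i <;> fin_cases j <;>
        simp_all [Matrix.cons_val_zero, Matrix.cons_val_one] 
    · intro i j
      have h1 := haa; have h2 := hab; have h3 := had
      show G.Adj (![s, ↑a, ↑b, ↑d] i) (![s, ↑a, ↑b, ↑d] j) ↔ claw.Adj i j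
      fin_cases i <;> fin_cases j <;>
        simp [claw, SimpleGraph.fromRel_adj, G.adj_comm, hnab, hnad, hnbd,
          haa, hab, had, haa.symm, hab.symm, had.symm,
          fun h => hnab (G.adj_symm h), fun h => hnad (G.adj_symm h),
          fun h => hnbd (G.adj_symm h)]
end

section
/- Let G be an infinite, locally finite, claw-free and bull-free graph. Then every finite ⊆-minimal vertex separator of G induces a complete subgraph (clique) of G. -/
open SimpleGraph

universe u

section StmtAux

lemma claw_of' {V : Type u} {G : SimpleGraph V} (hclaw : IsEmpty (claw ↪g G)) (c x y z : V)
    (hcx : G.Adj c x) (hcy : G.Adj c y) (hcz : G.Adj c z)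
    (hxy : ¬G.Adj x y) (hxz : ¬G.Adj x z) (hyz : ¬G.Adj y z)
    (nxy : x ≠ y) (nxz : x ≠ z) (nyz : y ≠ z) : False := by
  apply hclaw.false
  have ncx := hcx.ne; have ncy := hcy.ne; have ncz := hcz.ne
  have hxc : G.Adj x c := hcx.symm
  have hyc : G.Adj y c := hcy.symm
  have hzc : G.Adj z c := hcz.symm
  have hyx : ¬G.Adj y x := fun h => hxy h.symm
  have hzx : ¬G.Adj z x := fun h => hxz h.symm
  have hzy : ¬G.Adj z y := fun h => hyz h.symm
  have nyx : y ≠ x := nxy.symm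
  have nzx : z ≠ x := nxz.symm
  have nzy : z ≠ y := nyz.symm
  have nxc : x ≠ c := ncx.symm
  have nyc : y ≠ c := ncy.symm
  have nzc : z ≠ c := ncz.symm
  refine ⟨⟨![c,x,y,z], ?_⟩, ?_⟩
  · intro a b hab
    fin_cases a <;> fin_cases b <;> simp_all
  · intro a b
    change G.Adj (![c,x,y,z] a) (![c,x,y,z] b) ↔ claw.Adj a b
    fin_cases a <;> fin_cases b <;>
      simp_all [claw, fromRel_adj] <;> decide

lemma bull_of' {V : Type u} {G : SimpleGraph V} (hbull : IsEmpty (bull ↪g G)) (a b c d e : V)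
    (hab : G.Adj a b) (hac : G.Adj a c) (hbc : G.Adj b c)
    (hda : G.Adj d a) (heb : G.Adj e b)
    (hdb : ¬G.Adj d b) (hdc : ¬G.Adj d c) (hea : ¬G.Adj e a)
    (hec : ¬G.Adj e c) (hde : ¬G.Adj d e)
    (ndb : d ≠ b) (ndc : d ≠ c) (nea : e ≠ a) (nec : e ≠ c) (nde : d ≠ e) :
    False := by
  apply hbull.false
  have nab := hab.ne; have nac := hac.ne; have nbc := hbc.ne
  have nda := hda.ne; have neb := heb.ne
  have hba : G.Adj b a := hab.symm
  have hca : G.Adj c a := hac.symm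
  have hcb : G.Adj c b := hbc.symm
  have had : G.Adj a d := hda.symm
  have hbe : G.Adj b e := heb.symm
  have hbd : ¬G.Adj b d := fun h => hdb h.symm
  have hcd : ¬G.Adj c d := fun h => hdc h.symm
  have hae : ¬G.Adj a e := fun h => hea h.symm
  have hce : ¬G.Adj c e := fun h => hec h.symm
  have hed : ¬G.Adj e d := fun h => hde h.symm
  have nba : b ≠ a := nab.symm
  have nca : c ≠ a := nac.symm
  have ncb : c ≠ b := nbc.symm
  have nad : a ≠ d := nda.symm
  have nbe : b ≠ e := neb.symm
  have nbd : b ≠ d := ndb.symm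
  have ncd : c ≠ d := ndc.symm
  have nae : a ≠ e := nea.symm
  have nce : c ≠ e := nec.symm
  have ned : e ≠ d := nde.symm
  refine ⟨⟨![a,b,c,d,e], ?_⟩, ?_⟩
  · intro i j hij
    fin_cases i <;> fin_cases j <;> simp_all
  · intro i j
    change G.Adj (![a,b,c,d,e] i) (![a,b,c,d,e] j) ↔ bull.Adj i j
    fin_cases i <;> fin_cases j <;>
      simp_all [bull, fromRel_adj] <;> decide

lemma boundary_lemma' {W : Type u} (H : SimpleGraph W) (P : W → Prop) :
    ∀ {a b : W} (_ : H.Walk a b), P a → ¬ P b →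
      ∃ u v : W, H.Adj u v ∧ P u ∧ ¬ P v ∧ H.Reachable a u := by
  intro a b w
  induction w with
  | nil => intro h1 h2; exact absurd h1 h2
  | @cons a c b hac p ih =>
    intro h1 h2
    by_cases hc : P c
    · obtain ⟨u, v, h⟩ := ih hc h2
      exact ⟨u, v, h.1, h.2.1, h.2.2.1, (Adj.reachable hac).trans h.2.2.2⟩
    · exact ⟨a, c, hac, h1, hc, Reachable.refl a⟩

/-- Transfer reachability between induced subgraphs through a closed set of subtype vertices. -/

lemma reach_transfer' {V : Type u} (G : SimpleGraph V) (S : Set V)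
    (D : Set ↥(Sᶜ : Set V))
    (hD : ∀ {z w : ↥(Sᶜ : Set V)}, z ∈ D → (G.induce (Sᶜ : Set V)).Adj z w → w ∈ D)
    (A : Set V) (hDA : ∀ z ∈ D, (z : V) ∈ A) :
    ∀ {a b : ↥(Sᶜ : Set V)} (_ : (G.induce (Sᶜ : Set V)).Walk a b) (ha : a ∈ D) (hb : b ∈ D),
      (G.induce A).Reachable ⟨a.1, hDA a ha⟩ ⟨b.1, hDA b hb⟩ := by
  intro a b w
  induction w with
  | nil => intro ha hb; rfl
  | @cons a c b hac p ih =>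
    intro ha hb
    have hc : c ∈ D := hD ha hac
    have hG : G.Adj a.1 c.1 := by simpa using hac
    have : (G.induce A).Adj ⟨a.1, hDA a ha⟩ ⟨c.1, hDA c hc⟩ := by simpa using hG
    exact (Adj.reachable this).trans (ih hc hb)

lemma exists_induced_path' {W : Type u} (H : SimpleGraph W) {x y : W} (hr : H.Reachable x y) :
    ∃ (d : ℕ) (q : ℕ → W), q 0 = x ∧ q d = y ∧
      (∀ i, i < d → H.Adj (q i) (q (i+1))) ∧
      (∀ i j, i + 2 ≤ j → j ≤ d → ¬ H.Adj (q i) (q j)) ∧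
      (∀ i j, i ≤ d → j ≤ d → q i = q j → i = j) := by
  classical
  set d := H.dist x y with hd
  have key : ∀ w : W, H.Reachable w y → H.dist w y ≠ 0 →
      ∃ z, H.Adj w z ∧ H.Reachable z y ∧ H.dist z y + 1 = H.dist w y := by
    intro w hw hdw
    obtain ⟨p, hp⟩ := hw.exists_walk_length_eq_dist
    have hnil : ¬ p.Nil := by rw [Walk.nil_iff_length_eq]; omega
    refine ⟨p.getVert 1, p.adj_snd hnil, ⟨p.tail⟩, ?_⟩
    have h1 : H.dist (p.getVert 1) y ≤ p.tail.length := dist_le _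
    have h2 : p.tail.length + 1 = p.length := Walk.length_tail_add_one hnil
    have h3 : H.dist w y ≤ H.dist (p.getVert 1) y + 1 := by
      obtain ⟨q, hq⟩ := (Reachable.exists_walk_length_eq_dist ⟨p.tail⟩)
      have := dist_le (Walk.cons (p.adj_snd hnil) q)
      simpa [hq] using this
    omega
  set step : W → W := fun w =>
    if hc : H.Reachable w y ∧ H.dist w y ≠ 0 then (key w hc.1 hc.2).choose else w with hstep
  set q : ℕ → W := fun i => step^[i] x with hq
  have inv : ∀ i, i ≤ d → (H.Reachable (q i) y ∧ H.dist (q i) y = d - i) := by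
    intro i
    induction i with
    | zero => intro _; exact ⟨hr, by simp [hq, hd]⟩
    | succ n ih =>
      intro hn
      obtain ⟨hre, hdi⟩ := ih (by omega)
      have hne : H.dist (q n) y ≠ 0 := by omega
      have hcond : H.Reachable (q n) y ∧ H.dist (q n) y ≠ 0 := ⟨hre, hne⟩
      have hqs : q (n+1) = step (q n) := by
        simp [hq, Function.iterate_succ_apply']
      have hch := (key (q n) hre hne).choose_spec
      have : step (q n) = (key (q n) hre hne).choose := by
        rw [hstep]; simp [hcond]
      rw [hqs, this]
      exact ⟨hch.2.1, by omega⟩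
  have adj : ∀ i, i < d → H.Adj (q i) (q (i+1)) := by
    intro i hi
    obtain ⟨hre, hdi⟩ := inv i (by omega)
    have hne : H.dist (q i) y ≠ 0 := by omega
    have hcond : H.Reachable (q i) y ∧ H.dist (q i) y ≠ 0 := ⟨hre, hne⟩
    have hqs : q (i+1) = step (q i) := by
      simp [hq, Function.iterate_succ_apply']
    have hch := (key (q i) hre hne).choose_spec
    have : step (q i) = (key (q i) hre hne).choose := by
      rw [hstep]; simp [hcond]
    rw [hqs, this]
    exact hch.1
  refine ⟨d, q, by simp [hq], ?_, adj, ?_, ?_⟩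
  · obtain ⟨hre, hdi⟩ := inv d le_rfl
    have : H.dist (q d) y = 0 := by omega
    rcases dist_eq_zero_iff_eq_or_not_reachable.mp this with h | h
    · exact h
    · exact absurd hre h
  · intro i j hij hj hadj
    obtain ⟨hrei, hdi⟩ := inv i (by omega)
    obtain ⟨hrej, hdj⟩ := inv j hj
    obtain ⟨p, hp⟩ := hrej.exists_walk_length_eq_dist
    have := dist_le (Walk.cons hadj p)
    simp only [Walk.length_cons, hp] at this
    omega
  · intro i j hi hj heq
    obtain ⟨_, hdi⟩ := inv i hi
    obtain ⟨_, hdj⟩ := inv j hj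
    rw [heq] at hdi
    omega

lemma walk_to_nbr' {V : Type u} {G : SimpleGraph V} {S : Set V} {s : V} :
    ∀ {a b : ↥(((S \ {s})ᶜ : Set V))} (_ : (G.induce ((S \ {s})ᶜ : Set V)).Walk a b)
      (ha : a.1 ∈ (Sᶜ : Set V)) (hb : b.1 ∈ (Sᶜ : Set V)),
      (G.induce (Sᶜ : Set V)).Reachable ⟨a.1, ha⟩ ⟨b.1, hb⟩ ∨
      ∃ z : ↥(Sᶜ : Set V), G.Adj s z.1 ∧ (G.induce (Sᶜ : Set V)).Reachable ⟨a.1, ha⟩ z := by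
  intro a b w
  induction w with
  | nil => intro ha hb; left; rfl
  | @cons a c b hac p ih =>
    intro ha hb
    have hGac : G.Adj a.1 c.1 := by simpa using hac
    by_cases hc : c.1 ∈ (Sᶜ : Set V)
    · have hadj : (G.induce (Sᶜ : Set V)).Adj ⟨a.1, ha⟩ ⟨c.1, hc⟩ := by simpa using hGac
      rcases ih hc hb with h | ⟨z, hz1, hz2⟩
      · exact Or.inl ((Adj.reachable hadj).trans h)
      · exact Or.inr ⟨z, hz1, (Adj.reachable hadj).trans hz2⟩
    · have hcS : c.1 ∈ S := by simpa [Set.mem_compl_iff] using hc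
      have : c.1 = s := by
        have := c.2
        simp only [Set.mem_compl_iff, Set.mem_diff, Set.mem_singleton_iff, not_and, not_not] at this
        exact this hcS
      right
      refine ⟨⟨a.1, ha⟩, ?_, Reachable.refl _⟩
      have h2 : G.Adj (c : V) (a : V) := hGac.symm
      rw [this] at h2
      exact h2

end StmtAux

theorem stmt5 {V : Type u} (G : SimpleGraph V) (hinf : Infinite V)
    (hlf : ∀ v : V, (G.neighborSet v).Finite)
    (hclaw : IsEmpty (claw ↪g G)) (hbull : IsEmpty (bull ↪g G))
    (S : Set V) (hSfin : S.Finite) (hS : IsMinSeparator G S) :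
    S.Pairwise G.Adj := by
  classical
  rintro s hsS t htS hstne
  by_contra hadj
  obtain ⟨hSsep, hSmin⟩ := hS
  have h2 : ¬ ∀ p q : ↥(Sᶜ : Set V), (G.induce (Sᶜ : Set V)).Reachable p q := hSsep
  push_neg at h2
  obtain ⟨x, y, hxy⟩ := h2
  -- minimality: deleting S minus any u leaves a preconnected graph
  have hmin : ∀ u ∈ S, (G.induce ((S \ {u})ᶜ : Set V)).Preconnected := by
    intro u hu
    by_contra h
    exact hSmin (S \ {u}) (Set.sdiff_singleton_ssubset.mpr hu) h
  -- each u ∈ S has a neighbour in the component of p whenever p, q are disconnected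
  have nbr : ∀ u ∈ S, ∀ p q : ↥(Sᶜ : Set V), ¬ (G.induce (Sᶜ : Set V)).Reachable p q →
      ∃ z : ↥(Sᶜ : Set V), G.Adj u z.1 ∧ (G.induce (Sᶜ : Set V)).Reachable p z := by
    intro u hu p q hpq
    have hsub : ∀ w : V, w ∈ (Sᶜ : Set V) → w ∈ ((S \ {u})ᶜ : Set V) := by
      intro w hw
      simp only [Set.mem_compl_iff, Set.mem_diff, Set.mem_singleton_iff, not_and, not_not]
      intro hwS; exact absurd hwS hw
    obtain ⟨w⟩ := hmin u hu ⟨p.1, hsub _ p.2⟩ ⟨q.1, hsub _ q.2⟩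
    rcases walk_to_nbr' w p.2 q.2 with h | ⟨z, hz1, hz2⟩
    · exact absurd h hpq
    · exact ⟨z, hz1, hz2⟩
  -- every "component" contains a neighbour of each u ∈ S
  have compnbr : ∀ u ∈ S, ∀ z : ↥(Sᶜ : Set V),
      ∃ n : ↥(Sᶜ : Set V), G.Adj u n.1 ∧ (G.induce (Sᶜ : Set V)).Reachable z n := by
    intro u hu z
    by_cases h : (G.induce (Sᶜ : Set V)).Reachable x z
    · obtain ⟨n, hn1, hn2⟩ := nbr u hu x y hxy
      exact ⟨n, hn1, h.symm.trans hn2⟩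
    · exact nbr u hu z x (fun hr => h hr.symm)
  -- an infinite component
  haveI : Infinite V := hinf
  have hScinf : (Sᶜ : Set V).Infinite := hSfin.infinite_compl
  haveI : Infinite ↥(Sᶜ : Set V) := hScinf.to_subtype
  have Nfin : {n : ↥(Sᶜ : Set V) | G.Adj s n.1}.Finite := by
    have hsub : {n : ↥(Sᶜ : Set V) | G.Adj s n.1} ⊆ Subtype.val ⁻¹' (G.neighborSet s) := by
      intro n hn; exact hn
    exact (Set.Finite.preimage (Subtype.val_injective.injOn) (hlf s)).subset hsub
  have hcomp : ∃ n ∈ {n : ↥(Sᶜ : Set V) | G.Adj s n.1},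
      {z : ↥(Sᶜ : Set V) | (G.induce (Sᶜ : Set V)).Reachable n z}.Infinite := by
    by_contra h
    push_neg at h
    have hfin : (⋃ n ∈ {n : ↥(Sᶜ : Set V) | G.Adj s n.1},
        {z : ↥(Sᶜ : Set V) | (G.induce (Sᶜ : Set V)).Reachable n z}).Finite :=
      Set.Finite.biUnion Nfin (fun n hn => (h n hn))
    have hcover : (Set.univ : Set ↥(Sᶜ : Set V)) ⊆ ⋃ n ∈ {n : ↥(Sᶜ : Set V) | G.Adj s n.1},
        {z : ↥(Sᶜ : Set V) | (G.induce (Sᶜ : Set V)).Reachable n z} := by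
      intro z _
      obtain ⟨n, hn1, hn2⟩ := compnbr s hsS z
      exact Set.mem_biUnion hn1 hn2.symm
    exact Set.infinite_univ (hfin.subset hcover)
  obtain ⟨c0, hc0adj, hc0inf⟩ := hcomp
  set Gc := G.induce (Sᶜ : Set V) with hGcdef
  set D := {z : ↥(Sᶜ : Set V) | Gc.Reachable c0 z} with hDdef
  have hc0D : c0 ∈ D := Reachable.refl c0
  have hDclosed : ∀ {z w : ↥(Sᶜ : Set V)}, z ∈ D → Gc.Adj z w → w ∈ D :=
    fun hz ha => hz.trans ha.reachable
  -- a base point of another component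
  have hx'ex : ∃ x' : ↥(Sᶜ : Set V), ¬ Gc.Reachable c0 x' := by
    by_cases h : Gc.Reachable c0 x
    · exact ⟨y, fun hr => hxy ((h.symm.trans hr))⟩
    · exact ⟨x, h⟩
  obtain ⟨x', hx'⟩ := hx'ex
  -- neighbours of s and t in the other component
  obtain ⟨a2, ha2adj, ha2r⟩ := nbr s hsS x' c0 (fun hr => hx' hr.symm)
  obtain ⟨b2, hb2adj, hb2r⟩ := nbr t htS x' c0 (fun hr => hx' hr.symm)
  -- cross-component nonadjacency facts
  have crossD : ∀ w : ↥(Sᶜ : Set V), Gc.Reachable x' w → ∀ z ∈ D,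
      ¬ G.Adj z.1 w.1 ∧ z.1 ≠ w.1 := by
    intro w hw z hz
    constructor
    · intro hadj'
      have hGcadj : Gc.Adj z w := by simpa [hGcdef] using hadj'
      exact hx' ((hz.trans hGcadj.reachable).trans hw.symm)
    · intro heq
      have hzw : z = w := Subtype.ext heq
      rw [hzw] at hz
      exact hx' (hz.trans hw.symm)
  -- t has a neighbour in D
  obtain ⟨nt, hnt_adj, hnt_r⟩ := compnbr t htS c0
  have hntD : nt ∈ D := hnt_r
  -- the induced subgraph on D together with s and t
  set A : Set V := insert s (insert t (Subtype.val '' D)) with hAdef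
  have hsA : s ∈ A := Set.mem_insert _ _
  have htA : t ∈ A := Set.mem_insert_of_mem _ (Set.mem_insert _ _)
  have hDA : ∀ z ∈ D, (z : V) ∈ A := fun z hz =>
    Set.mem_insert_of_mem _ (Set.mem_insert_of_mem _ ⟨z, hz, rfl⟩)
  set H := G.induce A with hHdef
  -- s and t are H-reachable
  have hreach : H.Reachable ⟨s, hsA⟩ ⟨t, htA⟩ := by
    have e1 : H.Adj ⟨s, hsA⟩ ⟨c0.1, hDA c0 hc0D⟩ := by simpa [hHdef] using hc0adj
    have e2 : H.Adj ⟨nt.1, hDA nt hntD⟩ ⟨t, htA⟩ := by simpa [hHdef] using hnt_adj.symm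
    obtain ⟨w⟩ := hnt_r
    have e3 := reach_transfer' G S D hDclosed A hDA w hc0D hntD
    exact (e1.reachable.trans e3).trans e2.reachable
  -- an induced s-t path in H
  obtain ⟨d, q, hq0, hqd, hadjq, hnadjq, hinjq⟩ := exists_induced_path' H hreach
  set qv : ℕ → V := fun i => (q i).1 with hqvdef
  have hqv0 : qv 0 = s := by rw [hqvdef]; simp [hq0]
  have hqvd : qv d = t := by rw [hqvdef]; simp [hqd]
  have Gadj : ∀ i, i < d → G.Adj (qv i) (qv (i+1)) := by
    intro i hi; simpa [hHdef] using hadjq i hi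
  have Gnadj : ∀ i j, i + 2 ≤ j → j ≤ d → ¬ G.Adj (qv i) (qv j) := by
    intro i j hij hj h
    exact hnadjq i j hij hj (by simpa [hHdef] using h)
  have injv : ∀ i j, i ≤ d → j ≤ d → qv i = qv j → i = j := by
    intro i j hi hj h
    exact hinjq i j hi hj (Subtype.ext h)
  have hd2 : 2 ≤ d := by
    rcases Nat.lt_or_ge d 2 with h | h
    · interval_cases d
      · exact absurd (hqv0 ▸ hqvd ▸ rfl : s = t) hstne
      · exact absurd (hqv0 ▸ hqvd ▸ Gadj 0 (by omega)) hadj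
    · exact h
  -- interior vertices lie in D
  have interior : ∀ i, 1 ≤ i → i ≤ d - 1 →
      ∃ hz : qv i ∈ (Sᶜ : Set V), (⟨qv i, hz⟩ : ↥(Sᶜ : Set V)) ∈ D := by
    intro i h1 h2
    have hiA : qv i ∈ A := (q i).2
    have hins : qv i ≠ s := by
      intro h; rw [← hqv0] at h; have := injv i 0 (by omega) (by omega) h; omega
    have hint : qv i ≠ t := by
      intro h; rw [← hqvd] at h; have := injv i d (by omega) (by omega) h; omega
    rw [hAdef] at hiA
    rcases hiA with h | h
    · exact absurd h hins
    rcases h with h | h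
    · exact absurd h hint
    obtain ⟨z, hzD, hzeq⟩ := h
    refine ⟨by rw [← hzeq]; exact z.2, ?_⟩
    have : (⟨qv i, by rw [← hzeq]; exact z.2⟩ : ↥(Sᶜ : Set V)) = z := Subtype.ext hzeq.symm
    rw [this]; exact hzD
  -- the finite neighbourhood of the path
  set X : Set V := qv '' Set.Iic d with hXdef
  set NX : Set V := X ∪ ⋃ i ∈ Set.Iic d, G.neighborSet (qv i) with hNXdef
  have hNXfin : NX.Finite :=
    ((Set.finite_Iic d).image qv).union
      (Set.Finite.biUnion (Set.finite_Iic d) (fun i _ => hlf (qv i)))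
  have hXsub : X ⊆ NX := Set.subset_union_left
  have hadjNX : ∀ k ≤ d, ∀ w : V, G.Adj (qv k) w → w ∈ NX := by
    intro k hk w hw
    exact Set.mem_union_right _ (Set.mem_biUnion hk hw)
  -- a far-away vertex of D
  have hDinf : (Subtype.val '' D).Infinite :=
    hc0inf.image (Set.injOn_of_injective Subtype.val_injective)
  obtain ⟨w0v, hw0D', hw0NX⟩ := (hDinf.diff hNXfin).nonempty
  obtain ⟨w0, hw0D, rfl⟩ := hw0D'
  -- boundary pair
  obtain ⟨hq1S, hq1D⟩ := interior 1 le_rfl (by omega)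
  obtain ⟨wk⟩ := (hq1D.symm.trans hw0D : Gc.Reachable _ w0)
  have hPq1 : ((⟨qv 1, hq1S⟩ : ↥(Sᶜ : Set V)) : V) ∈ NX :=
    hXsub ⟨1, by simp [Set.mem_Iic]; omega, rfl⟩
  obtain ⟨u, w', hGcuw, huNX, hw'NX, hru⟩ :=
    boundary_lemma' Gc (fun z => (z : V) ∈ NX) wk hPq1 hw0NX
  have huD : u ∈ D := hq1D.trans hru
  have hw'D : w' ∈ D := hDclosed huD hGcuw
  have Guw : G.Adj u.1 w'.1 := by simpa [hGcdef] using hGcuw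
  -- facts about w'
  have hw'nadj : ∀ k ≤ d, ¬ G.Adj (qv k) w'.1 := by
    intro k hk h
    exact hw'NX (hadjNX k hk _ h)
  have hw'X : ∀ k ≤ d, qv k ≠ w'.1 := by
    intro k hk h
    exact hw'NX (hXsub ⟨k, hk, h⟩)
  -- u is not on the path
  have huX : ∀ k ≤ d, qv k ≠ u.1 := by
    intro k hk h
    exact hw'nadj k hk (h ▸ Guw)
  -- u is adjacent to the path
  have huadj : ∃ i ≤ d, G.Adj (qv i) u.1 := by
    rcases huNX with h | h
    · obtain ⟨k, hk, hkeq⟩ := h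
      exact absurd hkeq (huX k hk)
    · simp only [Set.mem_iUnion, mem_neighborSet, exists_prop] at h
      obtain ⟨i, hi, hadj'⟩ := h
      exact ⟨i, hi, hadj'⟩
  -- the set of path indices adjacent to u
  set I : Finset ℕ := (Finset.range (d+1)).filter (fun i => G.Adj (qv i) u.1) with hIdef
  have hInonempty : I.Nonempty := by
    obtain ⟨i, hi, hadj'⟩ := huadj
    exact ⟨i, by simp [hIdef, Finset.mem_filter, Finset.mem_range]; exact ⟨by omega, hadj'⟩⟩
  set i0 := I.min' hInonempty with hi0def
  set j0 := I.max' hInonempty with hj0def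
  have hi0I : i0 ∈ I := I.min'_mem hInonempty
  have hj0I : j0 ∈ I := I.max'_mem hInonempty
  have hi0d : i0 ≤ d := by
    have := (Finset.mem_filter.mp hi0I).1; rw [Finset.mem_range] at this; omega
  have hj0d : j0 ≤ d := by
    have := (Finset.mem_filter.mp hj0I).1; rw [Finset.mem_range] at this; omega
  have hi0adj : G.Adj (qv i0) u.1 := (Finset.mem_filter.mp hi0I).2
  have hj0adj : G.Adj (qv j0) u.1 := (Finset.mem_filter.mp hj0I).2
  have hi0j0 : i0 ≤ j0 := I.min'_le _ hj0I
  have notI : ∀ k ≤ d, (k < i0 ∨ j0 < k) → ¬ G.Adj (qv k) u.1 := by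
    intro k hk hor hadj'
    have hkI : k ∈ I := by
      simp only [hIdef, Finset.mem_filter, Finset.mem_range]
      exact ⟨by omega, hadj'⟩
    rcases hor with h | h
    · exact absurd (I.min'_le _ hkI) (by omega)
    · exact absurd (I.le_max' _ hkI) (by omega)
  clear_value i0 j0
  -- cross facts specialised
  have crossa2 : ∀ z ∈ D, ¬ G.Adj z.1 a2.1 ∧ z.1 ≠ a2.1 := crossD a2 ha2r
  have crossb2 : ∀ z ∈ D, ¬ G.Adj z.1 b2.1 ∧ z.1 ≠ b2.1 := crossD b2 hb2r
  -- case analysis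
  by_cases hcase1 : i0 + 2 ≤ j0
  · -- claw centred at u
    refine claw_of' hclaw u.1 (qv i0) (qv j0) w'.1 hi0adj.symm hj0adj.symm Guw
      (Gnadj i0 j0 hcase1 hj0d) (hw'nadj i0 hi0d) (hw'nadj j0 hj0d)
      ?_ (hw'X i0 hi0d) (hw'X j0 hj0d)
    intro h
    have := injv i0 j0 hi0d hj0d h
    omega
  by_cases hcase2 : j0 = i0 + 1
  · -- bull on the triangle (qv i0, u, qv j0)
    have hi0lt : i0 < d := by omega
    have hqadj : G.Adj (qv i0) (qv j0) := hcase2 ▸ Gadj i0 hi0lt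
    have hbu : G.Adj u.1 (qv j0) := hj0adj.symm
    by_cases hz : i0 = 0
    · -- horn a2 at qv i0 = s, horn w' at u
      subst hz
      have hj1 : j0 = 1 := by omega
      obtain ⟨hjS, hjD⟩ := interior j0 (by omega) (by omega)
      have ha2s : G.Adj a2.1 (qv 0) := by rw [hqv0]; exact ha2adj.symm
      have ca2u := crossa2 u huD
      have ca2j := crossa2 ⟨qv j0, hjS⟩ hjD
      have ca2w := crossa2 w' hw'D
      exact bull_of' hbull (qv 0) u.1 (qv j0) a2.1 w'.1
        hi0adj hqadj hbu ha2s Guw.symm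
        (fun h => ca2u.1 h.symm) (fun h => ca2j.1 h.symm)
        (fun h => hw'nadj 0 (by omega) h.symm) (fun h => hw'nadj j0 hj0d h.symm)
        (fun h => ca2w.1 h.symm)
        (fun h => ca2u.2 h.symm) (fun h => ca2j.2 h.symm)
        (fun h => hw'X 0 (by omega) h.symm) (fun h => hw'X j0 hj0d h.symm)
        (fun h => ca2w.2 h.symm)
    · -- horn qv (i0-1) at qv i0, horn w' at u
      have hi1 : 1 ≤ i0 := by omega
      have hpadj : G.Adj (qv (i0-1)) (qv i0) := by
        have := Gadj (i0-1) (by omega)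
        have he : i0 - 1 + 1 = i0 := by omega
        rwa [he] at this
      refine bull_of' hbull (qv i0) u.1 (qv j0) (qv (i0-1)) w'.1
        hi0adj hqadj hbu hpadj Guw.symm
        (notI (i0-1) (by omega) (by omega))
        (Gnadj (i0-1) j0 (by omega) hj0d)
        (fun h => hw'nadj i0 hi0d h.symm) (fun h => hw'nadj j0 hj0d h.symm)
        (hw'nadj (i0-1) (by omega))
        (huX (i0-1) (by omega))
        (fun h => by have := injv (i0-1) j0 (by omega) hj0d h; omega)
        (fun h => hw'X i0 hi0d h.symm) (fun h => hw'X j0 hj0d h.symm)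
        (hw'X (i0-1) (by omega))
  -- now j0 = i0
  have hj0i0 : j0 = i0 := by omega
  subst hj0i0
  have hsingle : ∀ k ≤ d, k ≠ j0 → ¬ G.Adj (qv k) u.1 := by
    intro k hk hne
    exact notI k hk (by omega)
  by_cases hz0 : j0 = 0
  · -- claw centred at s = qv 0
    subst hz0
    obtain ⟨h1S, h1D⟩ := interior 1 le_rfl (by omega)
    have c1a2 := crossa2 ⟨qv 1, h1S⟩ h1D
    have ca2u := crossa2 u huD
    have ha2s : G.Adj (qv 0) a2.1 := by rw [hqv0]; exact ha2adj
    exact claw_of' hclaw (qv 0) (qv 1) a2.1 u.1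
      (Gadj 0 (by omega)) ha2s hi0adj
      c1a2.1 (hsingle 1 (by omega) (by omega))
      (fun h => ca2u.1 h.symm)
      c1a2.2 (huX 1 (by omega)) (fun h => ca2u.2 h.symm)
  by_cases hzd : j0 = d
  · -- claw centred at t = qv d
    rw [hzd] at hi0adj hsingle
    obtain ⟨h1S, h1D⟩ := interior (d-1) (by omega) le_rfl
    have c1b2 := crossb2 ⟨qv (d-1), h1S⟩ h1D
    have cb2u := crossb2 u huD
    have hb2t : G.Adj (qv d) b2.1 := by rw [hqvd]; exact hb2adj
    have hpadj : G.Adj (qv d) (qv (d-1)) := by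
      have := Gadj (d-1) (by omega)
      have he : d - 1 + 1 = d := by omega
      rw [he] at this
      exact this.symm
    exact claw_of' hclaw (qv d) (qv (d-1)) b2.1 u.1
      hpadj hb2t hi0adj
      c1b2.1 (hsingle (d-1) (by omega) (by omega))
      (fun h => cb2u.1 h.symm)
      c1b2.2 (huX (d-1) (by omega)) (fun h => cb2u.2 h.symm)
  · -- claw centred at qv j0 in the middle
    have h1 : 1 ≤ j0 := by omega
    have h2 : j0 ≤ d - 1 := by omega
    have hpadj : G.Adj (qv j0) (qv (j0-1)) := by
      have := Gadj (j0-1) (by omega)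
      have he : j0 - 1 + 1 = j0 := by omega
      rw [he] at this
      exact this.symm
    exact claw_of' hclaw (qv j0) (qv (j0-1)) (qv (j0+1)) u.1
      hpadj (Gadj j0 (by omega)) hi0adj
      (Gnadj (j0-1) (j0+1) (by omega) (by omega))
      (hsingle (j0-1) (by omega) (by omega))
      (hsingle (j0+1) (by omega) (by omega))
      (fun h => by have := injv (j0-1) (j0+1) (by omega) (by omega) h; omega)
      (huX (j0-1) (by omega)) (huX (j0+1) (by omega))
end

section
/- Every locally finite, connected, claw-free and bull-free graph has at most two ends. -/
open SimpleGraph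

universe u

section Aux

variable {V : Type u} {G : SimpleGraph V}

lemma claw_false (hclaw : IsEmpty (claw ↪g G)) {c x y z : V}
    (hx : G.Adj c x) (hy : G.Adj c y) (hz : G.Adj c z)
    (nxy : x ≠ y) (nxz : x ≠ z) (nyz : y ≠ z)
    (axy : ¬ G.Adj x y) (axz : ¬ G.Adj x z) (ayz : ¬ G.Adj y z) : False := by
  have hx' := hx.symm; have hy' := hy.symm; have hz' := hz.symm
  have axy' : ¬ G.Adj y x := fun h => axy h.symm
  have axz' : ¬ G.Adj z x := fun h => axz h.symm
  have ayz' : ¬ G.Adj z y := fun h => ayz h.symm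
  have irr := G.irrefl (v := c)
  have irrx := G.irrefl (v := x); have irry := G.irrefl (v := y); have irrz := G.irrefl (v := z)
  apply hclaw.false
  refine ⟨⟨![c,x,y,z], ?_⟩, ?_⟩
  · intro a b hab
    fin_cases a <;> fin_cases b <;> simp_all [hx.ne, hy.ne, hz.ne, hx.ne', hy.ne', hz.ne']
  · intro a b
    fin_cases a <;> fin_cases b <;> simp [claw] <;> tauto

lemma bull_false (hbull : IsEmpty (bull ↪g G)) {a b c d e : V}
    (hab : G.Adj a b) (hac : G.Adj a c) (hbc : G.Adj b c)
    (had : G.Adj a d) (hbe : G.Adj b e)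
    (nae : ¬ G.Adj a e) (nbd : ¬ G.Adj b d) (ncd : ¬ G.Adj c d)
    (nce : ¬ G.Adj c e) (nde : ¬ G.Adj d e) : False := by
  have hdb : d ≠ b := fun h => ncd (h ▸ hbc.symm)
  have hdc : d ≠ c := fun h => nbd (h ▸ hbc)
  have hea : e ≠ a := fun h => nce (h ▸ hac.symm)
  have hec : e ≠ c := fun h => nae (h ▸ hac)
  have hde : d ≠ e := fun h => nae (h ▸ had)
  have hab' := hab.symm; have hac' := hac.symm; have hbc' := hbc.symm
  have had' := had.symm; have hbe' := hbe.symm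
  have nae' : ¬ G.Adj e a := fun h => nae h.symm
  have nbd' : ¬ G.Adj d b := fun h => nbd h.symm
  have ncd' : ¬ G.Adj d c := fun h => ncd h.symm
  have nce' : ¬ G.Adj e c := fun h => nce h.symm
  have nde' : ¬ G.Adj e d := fun h => nde h.symm
  have irra := G.irrefl (v := a); have irrb := G.irrefl (v := b)
  have irrc := G.irrefl (v := c); have irrd := G.irrefl (v := d)
  have irre := G.irrefl (v := e)
  apply hbull.false
  refine ⟨⟨![a,b,c,d,e], ?_⟩, ?_⟩
  · intro i j hij
    fin_cases i <;> fin_cases j <;>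
      simp_all [hab.ne, hac.ne, hbc.ne, had.ne, hbe.ne, hab.ne', hac.ne', hbc.ne', had.ne', hbe.ne']
  · intro i j
    fin_cases i <;> fin_cases j <;> simp [bull] <;> tauto

/-- auxiliary: two components containing the same vertex are equal -/
lemma supp_unique {K : Set V} {x : V} {C D : G.ComponentCompl K}
    (hC : x ∈ C.supp) (hD : x ∈ D.supp) : C = D := by
  obtain ⟨h1, e1⟩ := hC
  obtain ⟨h2, e2⟩ := hD
  rw [← e1, ← e2]

lemma not_adj_comps {K : Set V} {C D : G.ComponentCompl K} (h : C ≠ D) {x y : V}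
    (hx : x ∈ C.supp) (hy : y ∈ D.supp) : ¬ G.Adj x y := by
  intro hadj
  exact h (supp_unique (SimpleGraph.ComponentCompl.mem_of_adj x y hx hy.choose hadj) hy)

lemma ne_comps {K : Set V} {C D : G.ComponentCompl K} (h : C ≠ D) {x y : V}
    (hx : x ∈ C.supp) (hy : y ∈ D.supp) : x ≠ y := by
  rintro rfl; exact h (supp_unique hx hy)

lemma supp_not_mem {K : Set V} {C : G.ComponentCompl K} {x : V} (hx : x ∈ C.supp) : x ∉ K :=
  hx.choose

/-- walks in the complement of `K` stay inside a fixed component -/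
lemma walk_stays {K : Set V} {C : G.ComponentCompl K} :
    ∀ {a b : (Kᶜ : Set V)} (_ : (G.induce Kᶜ).Walk a b), (a : V) ∈ C.supp → (b : V) ∈ C.supp := by
  intro a b w
  induction w with
  | nil => exact id
  | cons h _ ih =>
    rename_i u v _ _
    intro hu
    apply ih
    have hGadj : G.Adj u v := by
      simpa using h
    exact SimpleGraph.ComponentCompl.mem_of_adj _ _ hu v.prop hGadj

/-- The restriction of `G` to a vertex set `T` (as a graph on all of `V`). -/
@[reducible] def restrict (G : SimpleGraph V) (T : Set V) : SimpleGraph V where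
  Adj x y := x ∈ T ∧ y ∈ T ∧ G.Adj x y
  symm := ⟨fun x y ⟨hx, hy, h⟩ => ⟨hy, hx, h.symm⟩⟩
  loopless := ⟨fun x ⟨_, _, h⟩ => G.irrefl h⟩

/-- `s` is adjacent to the component `C`. -/
def AdjTo (G : SimpleGraph V) (s : V) {K : Set V} (C : G.ComponentCompl K) : Prop :=
  ∃ x ∈ C.supp, G.Adj s x

lemma restrict_reach {S : Set V} {C : G.ComponentCompl S} {T : Set V} (hsub : C.supp ⊆ T)
    {x y : V} (hx : x ∈ C.supp) (hy : y ∈ C.supp) : (restrict G T).Reachable x y := by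
  obtain ⟨hx', ex⟩ := hx
  obtain ⟨hy', ey⟩ := hy
  have hr : (G.induce Sᶜ).Reachable ⟨x, hx'⟩ ⟨y, hy'⟩ :=
    SimpleGraph.ConnectedComponent.exact (ex.trans ey.symm)
  obtain ⟨w⟩ := hr
  have main : ∀ (a b : (Sᶜ : Set V)) (_ : (G.induce Sᶜ).Walk a b), (a : V) ∈ C.supp →
      (restrict G T).Reachable a b := by
    intro a b w
    induction w with
    | nil => exact fun _ => SimpleGraph.Reachable.refl _
    | cons h _ ih =>
      rename_i u v _ _
      intro hu
      have hGadj : G.Adj u v := by simpa using h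
      have hv : (v : V) ∈ C.supp := SimpleGraph.ComponentCompl.mem_of_adj _ _ hu v.prop hGadj
      exact ((show (restrict G T).Adj u v from ⟨hsub hu, hsub hv, hGadj⟩).reachable).trans (ih hv)
  exact main _ _ w ⟨hx', ex⟩

lemma supp_hom_eq [DecidableEq V] {S : Finset V} {s : V} {D : G.ComponentCompl (↑S : Set V)}
    (hna : ¬ AdjTo G s D) (hsub : (↑(S.erase s) : Set V) ⊆ (↑S : Set V)) :
    (D.hom hsub).supp = D.supp := by
  obtain ⟨v, hv, rfl⟩ := D.exists_eq_mk
  rw [SimpleGraph.ComponentCompl.hom_mk]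
  apply Set.eq_of_subset_of_subset
  · intro u hu
    obtain ⟨hu', e⟩ := hu
    have hr : (G.induce ((↑(S.erase s) : Set V))ᶜ).Reachable
        ⟨v, Set.notMem_subset hsub hv⟩ ⟨u, hu'⟩ :=
      SimpleGraph.ConnectedComponent.exact (e.symm)
    obtain ⟨w⟩ := hr
    have main : ∀ (a b : (((↑(S.erase s) : Set V))ᶜ : Set V))
        (_ : (G.induce ((↑(S.erase s) : Set V))ᶜ).Walk a b),
        (a : V) ∈ (G.componentComplMk hv).supp → (b : V) ∈ (G.componentComplMk hv).supp := by
      intro a b w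
      induction w with
      | nil => exact id
      | cons h _ ih =>
        rename_i p q _ _
        intro hp
        have hGadj : G.Adj p q := by simpa using h
        by_cases hqS : (q : V) ∈ (↑S : Set V)
        · exfalso
          have hqs : (q : V) = s := by
            by_contra hne
            exact q.prop (by simpa [Finset.mem_erase] using And.intro (by simpa using hqS) hne)
          exact hna ⟨p, hp, by
            have := hGadj.symm
            rw [hqs] at this
            exact this⟩
        · exact ih (SimpleGraph.ComponentCompl.mem_of_adj _ _ hp hqS hGadj)
    exact main _ _ w (G.componentComplMk_mem hv)
  · rw [← SimpleGraph.ComponentCompl.hom_mk (G := G) hv hsub]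
    exact SimpleGraph.ComponentCompl.subset_hom _ _

lemma comp_unique_of_empty (hconn : G.Connected)
    (D1 D2 : G.ComponentCompl (↑(∅ : Finset V) : Set V)) : D1 = D2 := by
  obtain ⟨v, hv, rfl⟩ := D1.exists_eq_mk
  obtain ⟨w, hw, rfl⟩ := D2.exists_eq_mk
  have main : ∀ (a b : V) (_ : G.Walk a b) (ha : a ∉ (↑(∅ : Finset V) : Set V))
      (hb : b ∉ (↑(∅ : Finset V) : Set V)), G.componentComplMk ha = G.componentComplMk hb := by
    intro a b p
    induction p with
    | nil => intro ha hb; rfl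
    | cons h q ih =>
      rename_i x y _
      intro ha hb
      have hy : y ∉ (↑(∅ : Finset V) : Set V) := by simp
      exact (G.componentComplMk_eq_of_adj ha hy h).trans (ih hy hb)
  obtain ⟨p⟩ := hconn.preconnected v w
  exact main v w p hv hw

lemma dist_adj_le {H : SimpleGraph V} {t x y : V} (hr : H.Reachable t x) (h : H.Adj x y) :
    H.dist t y ≤ H.dist t x + 1 := by
  obtain ⟨w, hw⟩ := hr.exists_walk_length_eq_dist
  have := H.dist_le (w.concat h)
  rwa [SimpleGraph.Walk.length_concat, hw] at this

lemma exists_parent {H : SimpleGraph V} {t x : V} {k : ℕ} (hr : H.Reachable t x)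
    (hd : H.dist t x = k + 1) : ∃ p, H.Adj p x ∧ H.dist t p = k := by
  obtain ⟨w, hw⟩ := hr.exists_walk_length_eq_dist
  have hw' : w.reverse.length = k + 1 := by
    rw [SimpleGraph.Walk.length_reverse, hw, hd]
  generalize hrev : w.reverse = wr at hw'
  cases wr with
  | nil => simp at hw'
  | cons h q =>
    rename_i y
    have hq : q.length = k := by simpa using hw'
    have hry : H.Reachable t y := ⟨q.reverse⟩
    have h1 : H.dist t y ≤ k := by
      have := H.dist_le q.reverse
      rwa [SimpleGraph.Walk.length_reverse, hq] at this
    have h2 : k + 1 ≤ H.dist t y + 1 := by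
      rw [← hd]
      exact dist_adj_le hry h.symm
    exact ⟨y, h.symm, by omega⟩

lemma endgame (hlf : ∀ v : V, (G.neighborSet v).Finite)
    (hclaw : IsEmpty (claw ↪g G)) (hbull : IsEmpty (bull ↪g G))
    {S : Finset V} {Cs Dd Ee : G.ComponentCompl (↑S : Set V)}
    (hCD : Cs ≠ Dd) (hCE : Cs ≠ Ee) (hDE : Dd ≠ Ee)
    (hCinf : Cs.supp.Infinite)
    {s t : V} (hsS : s ∈ S) (htS : t ∈ S)
    (hsC : AdjTo G s Cs) (hsD : AdjTo G s Dd) (hsE : ¬ AdjTo G s Ee)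
    (htC : AdjTo G t Cs) (htE : AdjTo G t Ee) (htD : ¬ AdjTo G t Dd) : False := by
  classical
  obtain ⟨a0, ha0C, hta0⟩ := htC
  obtain ⟨y, hyE, hty⟩ := htE
  obtain ⟨c, hcD, hsc⟩ := hsD
  obtain ⟨b0, hb0C, hsb0⟩ := hsC
  have hsnC : s ∉ Cs.supp := fun h =>
    SimpleGraph.ComponentCompl.notMem_of_mem h (Finset.mem_coe.mpr hsS)
  have htnC : t ∉ Cs.supp := fun h =>
    SimpleGraph.ComponentCompl.notMem_of_mem h (Finset.mem_coe.mpr htS)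
  have hcnS : c ∉ (↑S : Set V) := SimpleGraph.ComponentCompl.notMem_of_mem hcD
  have hstne : s ≠ t := fun h => htD ⟨c, hcD, by rw [← h]; exact hsc⟩
  -- s and t are not adjacent
  have hst : ¬ G.Adj s t := by
    intro hadj
    have key : ∀ e, e ∈ Cs.supp → G.Adj s e → G.Adj t e := by
      intro e heC hse
      by_contra hte
      exact claw_false hclaw hsc hse hadj
        (ne_comps hCD.symm hcD heC) (fun h => hcnS (h ▸ Finset.mem_coe.mpr htS))
        (fun h => htnC (h ▸ heC))
        (not_adj_comps hCD.symm hcD heC) (fun h => htD ⟨c, hcD, h.symm⟩)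
        (fun h => hte h.symm)
    exact bull_false hbull hadj hsb0 (key b0 hb0C hsb0) hsc hty
      (fun h => hsE ⟨y, hyE, h⟩) (fun h => htD ⟨c, hcD, h⟩)
      (not_adj_comps hCD hb0C hcD) (not_adj_comps hCE hb0C hyE) (not_adj_comps hDE hcD hyE)
  set T : Set V := insert t Cs.supp with hTdef
  have hmemT : ∀ {x : V}, x ∈ Cs.supp → x ∈ T := fun hx => Set.mem_insert_of_mem _ hx
  have htT : t ∈ T := Set.mem_insert _ _
  have hTC : ∀ {x : V}, x ∈ T → x ≠ t → x ∈ Cs.supp := fun hx hxt =>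
    (Set.mem_insert_iff.mp hx).resolve_left hxt
  have hsnT : s ∉ T := fun h => (Set.mem_insert_iff.mp h).elim hstne hsnC
  have hcnT : c ∉ T := fun h => (Set.mem_insert_iff.mp h).elim
    (fun h' => hcnS (h' ▸ Finset.mem_coe.mpr htS)) (fun h' => hCD (supp_unique h' hcD))
  have hreach : ∀ {x : V}, x ∈ T → (restrict G T).Reachable t x := by
    intro x hx
    by_cases hxt : x = t
    · rw [hxt]
    · have hxC : x ∈ Cs.supp := hTC hx hxt
      have h1 : (restrict G T).Adj t a0 := ⟨htT, hmemT ha0C, hta0⟩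
      exact h1.reachable.trans (restrict_reach (fun _ h => hmemT h) ha0C hxC)
  have gap : ∀ {x y : V}, x ∈ T → y ∈ T →
      (restrict G T).dist t x + 2 ≤ (restrict G T).dist t y → ¬ G.Adj x y := by
    intro x y hx hy hgap hadj
    have := dist_adj_le (hreach hx) (show (restrict G T).Adj x y from ⟨hx, hy, hadj⟩)
    omega
  have lvt : (restrict G T).dist t t = 0 := SimpleGraph.dist_self
  have lv0 : ∀ {x : V}, x ∈ T → (restrict G T).dist t x = 0 → x = t := by
    intro x hx h0
    exact ((hreach hx).dist_eq_zero_iff.mp h0).symm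
  have parent : ∀ {x : V} (k : ℕ), x ∈ T → (restrict G T).dist t x = k + 1 →
      ∃ p, p ∈ T ∧ (restrict G T).dist t p = k ∧ G.Adj p x := by
    intro x k hx hlx
    obtain ⟨p, hadj, hdp⟩ := exists_parent (hreach hx) hlx
    exact ⟨p, hadj.1, hdp, hadj.2.2⟩
  have lev_fin : ∀ k, {x | x ∈ T ∧ (restrict G T).dist t x = k}.Finite := by
    intro k
    induction k with
    | zero =>
      apply Set.Finite.subset (Set.finite_singleton t)
      rintro x ⟨hx, h0⟩
      exact lv0 hx h0
    | succ k ih =>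
      apply Set.Finite.subset (Set.Finite.biUnion ih (fun p _ => hlf p))
      rintro x ⟨hx, hlx⟩
      obtain ⟨p, hpT, hlp, hadj⟩ := parent k hx hlx
      exact Set.mem_biUnion (⟨hpT, hlp⟩ : p ∈ {x | x ∈ T ∧ _}) hadj
  have descend : ∀ (m : ℕ) {x : V}, x ∈ T → (restrict G T).dist t x = m →
      ∀ j, j ≤ m → ∃ z, z ∈ T ∧ (restrict G T).dist t z = j := by
    intro m
    induction m with
    | zero => exact fun {x} hx h0 j hj => ⟨x, hx, by omega⟩
    | succ m ih =>
      intro x hx hm j hj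
      rcases Nat.eq_or_lt_of_le hj with rfl | hlt
      · exact ⟨x, hx, hm⟩
      · obtain ⟨p, hpT, hlp, _⟩ := parent m hx hm
        exact ih hpT hlp j (by omega)
  have lev_ne : ∀ m, ∃ z, z ∈ T ∧ (restrict G T).dist t z = m := by
    intro m
    have hfin : {x | x ∈ T ∧ (restrict G T).dist t x < m}.Finite := by
      apply Set.Finite.subset (Set.Finite.biUnion (Set.finite_Iio m) (fun j _ => lev_fin j))
      rintro x ⟨hx, hlt⟩
      exact Set.mem_biUnion hlt ⟨hx, rfl⟩
    obtain ⟨x, hxC, hxF⟩ := (hCinf.diff hfin).nonempty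
    have hxT := hmemT hxC
    have hge : m ≤ (restrict G T).dist t x := by
      by_contra h
      exact hxF ⟨hxT, by omega⟩
    exact descend _ hxT rfl m hge
  have clique : ∀ i, 1 ≤ i → ∀ x y : V, x ∈ T → y ∈ T → (restrict G T).dist t x = i →
      (restrict G T).dist t y = i → x ≠ y → G.Adj x y := by
    intro i
    induction i using Nat.strong_induction_on with
    | _ i ih =>
      intro hi x y hxT hyT hlx hly hxy
      by_contra hnadj
      have hxC : x ∈ Cs.supp := hTC hxT (fun h => by rw [h, lvt] at hlx; omega)
      have hyC : y ∈ Cs.supp := hTC hyT (fun h => by rw [h, lvt] at hly; omega)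
      obtain ⟨px, hpxT, hlpx, hpx⟩ := parent (i-1) hxT (by omega)
      rcases Nat.lt_or_ge i 2 with h2 | h2
      · have hpxt : px = t := lv0 hpxT (by omega)
        obtain ⟨py, hpyT, hlpy, hpy⟩ := parent (i-1) hyT (by omega)
        have hpyt : py = t := lv0 hpyT (by omega)
        rw [hpxt] at hpx
        rw [hpyt] at hpy
        exact claw_false hclaw hpx hpy hty hxy (ne_comps hCE hxC hyE) (ne_comps hCE hyC hyE)
          hnadj (not_adj_comps hCE hxC hyE) (not_adj_comps hCE hyC hyE)
      · have nocommon : ∀ w, w ∈ T → (restrict G T).dist t w = i - 1 →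
            G.Adj w x → G.Adj w y → False := by
          intro w hwT hlw hwx hwy
          obtain ⟨q, hqT, hlq, hq⟩ := parent (i-2) hwT (by omega)
          exact claw_false hclaw hq.symm hwx hwy
            (fun h => by rw [h] at hlq; omega) (fun h => by rw [h] at hlq; omega) hxy
            (gap hqT hxT (by omega)) (gap hqT hyT (by omega)) hnadj
        obtain ⟨py, hpyT, hlpy, hpy⟩ := parent (i-1) hyT (by omega)
        have hpxy : ¬ G.Adj px y := fun h => nocommon px hpxT hlpx hpx h
        have hpyx : ¬ G.Adj py x := fun h => nocommon py hpyT hlpy h hpy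
        have hpxpy : px ≠ py := fun h => nocommon px hpxT hlpx hpx (by rw [h]; exact hpy)
        have hadjp : G.Adj px py := ih (i-1) (by omega) (by omega) px py hpxT hpyT hlpx hlpy hpxpy
        obtain ⟨q, hqT, hlq, hq⟩ := parent (i-2) hpxT (by omega)
        by_cases hqpy : G.Adj q py
        · exact bull_false hbull hadjp hq.symm hqpy.symm hpx hpy
            hpxy hpyx (gap hqT hxT (by omega)) (gap hqT hyT (by omega)) hnadj
        · exact claw_false hclaw hq.symm hadjp hpx
            (fun h => by rw [h] at hlq; omega) (fun h => by rw [h] at hlq; omega)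
            (fun h => by rw [h] at hlpy; omega)
            hqpy (gap hqT hxT (by omega)) hpyx
  have hP : ∃ k, ∃ b, b ∈ Cs.supp ∧ G.Adj s b ∧ (restrict G T).dist t b = k :=
    ⟨_, b0, hb0C, hsb0, rfl⟩
  obtain ⟨b, hbC, hsb, hlb⟩ := Nat.find_spec hP
  have hk1 : 1 ≤ Nat.find hP := by
    by_contra h
    have : b = t := lv0 (hmemT hbC) (by omega)
    exact htnC (this ▸ hbC)
  have Fmin : ∀ p, p ∈ T → (restrict G T).dist t p < Nat.find hP → ¬ G.Adj s p := by
    intro p hpT hlt hadj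
    by_cases hpt : p = t
    · exact hst (by rw [← hpt]; exact hadj)
    · exact Nat.find_min hP hlt ⟨p, hTC hpT hpt, hadj, rfl⟩
  have claim1 : ∀ bh, bh ∈ Cs.supp → G.Adj s bh → (restrict G T).dist t bh = Nat.find hP →
      ∀ w, w ∈ T → (restrict G T).dist t w = Nat.find hP + 1 → G.Adj bh w → False := by
    intro bh hbhC hsbh hlbh w hwT hlw hbw
    obtain ⟨p, hpT, hlp, hpb⟩ := parent (Nat.find hP - 1) (hmemT hbhC) (by omega)
    have hsp : ¬ G.Adj s p := Fmin p hpT (by omega)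
    have hwC : w ∈ Cs.supp := hTC hwT (fun h => by rw [h, lvt] at hlw; omega)
    have hcp : ¬ G.Adj c p := by
      by_cases hpt : p = t
      · exact fun h => htD ⟨c, hcD, (by rw [← hpt]; exact h.symm)⟩
      · exact not_adj_comps hCD.symm hcD (hTC hpT hpt)
    by_cases hsw : G.Adj s w
    · exact bull_false hbull hsbh hsw hbw hsc hpb.symm
        hsp (not_adj_comps hCD hbhC hcD) (not_adj_comps hCD hwC hcD)
        (fun h => gap hpT hwT (by omega) h.symm) hcp
    · exact claw_false hclaw hsbh.symm hpb.symm hbw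
        (fun h => hsnT (h ▸ hpT)) (fun h => hsnT (h ▸ hwT))
        (fun h => by rw [h] at hlp; omega)
        hsp hsw (gap hpT hwT (by omega))
  obtain ⟨z, hzT, hlz⟩ := lev_ne (Nat.find hP + 1)
  have hzC : z ∈ Cs.supp := hTC hzT (fun h => by rw [h, lvt] at hlz; omega)
  obtain ⟨b'', hb''T, hlb'', hb''z⟩ := parent (Nat.find hP) hzT hlz
  have hb''C : b'' ∈ Cs.supp := hTC hb''T (fun h => by rw [h, lvt] at hlb''; omega)
  by_cases hsb'' : G.Adj s b''
  · exact claim1 b'' hb''C hsb'' hlb'' z hzT hlz hb''z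
  · by_cases hbz : G.Adj b z
    · exact claim1 b hbC hsb hlb z hzT hlz hbz
    · have hbb'' : b ≠ b'' := fun h => hsb'' (h ▸ hsb)
      have hadjbb : G.Adj b b'' := clique (Nat.find hP) hk1 b b'' (hmemT hbC) hb''T hlb hlb'' hbb''
      obtain ⟨p'', hp''T, hlp'', hp''⟩ := parent (Nat.find hP - 1) hb''T (by omega)
      have hsp'' : ¬ G.Adj s p'' := Fmin p'' hp''T (by omega)
      by_cases hbp'' : G.Adj b p''
      · by_cases hsz : G.Adj s z
        · exact claw_false hclaw hsb hsz hsc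
            (fun h => by rw [h] at hlb; omega) (ne_comps hCD hbC hcD) (ne_comps hCD hzC hcD)
            hbz (not_adj_comps hCD hbC hcD) (not_adj_comps hCD hzC hcD)
        · exact bull_false hbull hadjbb hbp'' hp''.symm hsb.symm hb''z
            hbz (fun h => hsb'' h.symm) (fun h => hsp'' h.symm)
            (gap hp''T hzT (by omega)) hsz
      · exact claw_false hclaw hadjbb.symm hb''z hp''.symm
          (fun h => by rw [h] at hlb; omega) (fun h => by rw [h] at hlb; omega)
          (fun h => by rw [h] at hlz; omega)
          hbz hbp'' (fun h => gap hp''T hzT (by omega) h.symm)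

theorem no_three_inf (hlf : ∀ v : V, (G.neighborSet v).Finite) (hconn : G.Connected)
    (hclaw : IsEmpty (claw ↪g G)) (hbull : IsEmpty (bull ↪g G)) :
    ∀ (n : ℕ) (S : Finset V), S.card = n →
      ∀ (D1 D2 D3 : G.ComponentCompl (↑S : Set V)),
      D1 ≠ D2 → D1 ≠ D3 → D2 ≠ D3 →
      D1.supp.Infinite → D2.supp.Infinite → D3.supp.Infinite → False := by
  intro n
  induction n using Nat.strong_induction_on with
  | _ n ih =>
  intro S hcard D1 D2 D3 h12 h13 h23 i1 i2 i3
  classical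
  have claw3 : ∀ (u : V) (C1 C2 C3 : G.ComponentCompl (↑S : Set V)),
      C1 ≠ C2 → C1 ≠ C3 → C2 ≠ C3 →
      AdjTo G u C1 → AdjTo G u C2 → AdjTo G u C3 → False := by
    rintro u C1 C2 C3 n12 n13 n23 ⟨x1, hx1, a1⟩ ⟨x2, hx2, a2⟩ ⟨x3, hx3, a3⟩
    exact claw_false hclaw a1 a2 a3 (ne_comps n12 hx1 hx2) (ne_comps n13 hx1 hx3)
      (ne_comps n23 hx2 hx3) (not_adj_comps n12 hx1 hx2) (not_adj_comps n13 hx1 hx3)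
      (not_adj_comps n23 hx2 hx3)
  rcases S.eq_empty_or_nonempty with rfl | hSne
  · exact h12 (comp_unique_of_empty hconn D1 D2)
  have aux : ∀ s ∈ S, ∀ (A1 A2 A3 : G.ComponentCompl (↑S : Set V)),
      A1 ≠ A2 → A1 ≠ A3 → A2 ≠ A3 → A1.supp.Infinite → A2.supp.Infinite → A3.supp.Infinite →
      ¬ AdjTo G s A1 → ¬ AdjTo G s A2 → False := by
    intro s hs A1 A2 A3 n12 n13 n23 j1 j2 j3 na1 na2
    have hsub : (↑(S.erase s) : Set V) ⊆ (↑S : Set V) := by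
      intro x hx
      exact Finset.mem_coe.mpr (Finset.mem_of_mem_erase (Finset.mem_coe.mp hx))
    have e1 : ((A1.hom hsub).supp : Set V) = A1.supp := supp_hom_eq na1 hsub
    have e2 : ((A2.hom hsub).supp : Set V) = A2.supp := supp_hom_eq na2 hsub
    refine ih (S.erase s).card ?_ (S.erase s) rfl (A1.hom hsub) (A2.hom hsub) (A3.hom hsub)
      ?_ ?_ ?_ ?_ ?_ ?_
    · rw [← hcard]; exact Finset.card_erase_lt_of_mem hs
    · intro h
      exact n12 (SimpleGraph.ComponentCompl.supp_inj.mp (by rw [← e1, ← e2, h]))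
    · intro h
      obtain ⟨x, hx⟩ := j3.nonempty
      have hx1 : x ∈ (A1.hom hsub).supp := by
        rw [h]; exact SimpleGraph.ComponentCompl.subset_hom A3 hsub hx
      rw [e1] at hx1
      exact n13 (supp_unique hx1 hx)
    · intro h
      obtain ⟨x, hx⟩ := j3.nonempty
      have hx2 : x ∈ (A2.hom hsub).supp := by
        rw [h]; exact SimpleGraph.ComponentCompl.subset_hom A3 hsub hx
      rw [e2] at hx2
      exact n23 (supp_unique hx2 hx)
    · exact SimpleGraph.ComponentCompl.hom_infinite _ _ j1
    · exact SimpleGraph.ComponentCompl.hom_infinite _ _ j2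
    · exact SimpleGraph.ComponentCompl.hom_infinite _ _ j3
  have pairTwo : ∀ s ∈ S, (AdjTo G s D1 ∧ AdjTo G s D2) ∨ (AdjTo G s D1 ∧ AdjTo G s D3) ∨
      (AdjTo G s D2 ∧ AdjTo G s D3) := by
    intro s hs
    by_cases a1 : AdjTo G s D1 <;> by_cases a2 : AdjTo G s D2 <;> by_cases a3 : AdjTo G s D3
    · exact Or.inl ⟨a1, a2⟩
    · exact Or.inl ⟨a1, a2⟩
    · exact Or.inr (Or.inl ⟨a1, a3⟩)
    · exact absurd (aux s hs D2 D3 D1 h23 h12.symm h13.symm i2 i3 i1 a2 a3) not_false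
    · exact Or.inr (Or.inr ⟨a2, a3⟩)
    · exact absurd (aux s hs D1 D3 D2 h13 h12 h23.symm i1 i3 i2 a1 a3) not_false
    · exact absurd (aux s hs D1 D2 D3 h12 h13 h23 i1 i2 i3 a1 a2) not_false
    · exact absurd (aux s hs D1 D2 D3 h12 h13 h23 i1 i2 i3 a1 a2) not_false
  have bdry : ∀ C : G.ComponentCompl (↑S : Set V), ∃ u ∈ S, AdjTo G u C := by
    intro C
    obtain ⟨⟨x, u⟩, hx, hu, hadj⟩ :=
      C.exists_adj_boundary_pair hconn.preconnected (Finset.coe_nonempty.mpr hSne)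
    exact ⟨u, Finset.mem_coe.mp hu, ⟨x, hx, hadj.symm⟩⟩
  obtain ⟨t0, ht0S, ht0D3⟩ := bdry D3
  by_cases hA1 : AdjTo G t0 D1
  · have ht0nD2 : ¬ AdjTo G t0 D2 := fun h => claw3 t0 D1 D2 D3 h12 h13 h23 hA1 h ht0D3
    obtain ⟨s0, hs0S, hs0D2⟩ := bdry D2
    by_cases hB1 : AdjTo G s0 D1
    · have hs0nD3 : ¬ AdjTo G s0 D3 := fun h => claw3 s0 D1 D2 D3 h12 h13 h23 hB1 hs0D2 h
      exact endgame hlf hclaw hbull h12 h13 h23 i1 hs0S ht0S hB1 hs0D2 hs0nD3 hA1 ht0D3 ht0nD2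
    · have hs0D3 : AdjTo G s0 D3 := by
        rcases pairTwo s0 hs0S with ⟨a, _⟩ | ⟨a, b⟩ | ⟨_, b⟩
        · exact absurd a hB1
        · exact absurd a hB1
        · exact b
      exact endgame hlf hclaw hbull h23.symm h13.symm h12.symm i3 hs0S ht0S hs0D3 hs0D2 hB1
        ht0D3 hA1 ht0nD2
  · have ht0D2 : AdjTo G t0 D2 := by
      rcases pairTwo t0 ht0S with ⟨a, b⟩ | ⟨a, _⟩ | ⟨b, _⟩
      · exact absurd a hA1
      · exact absurd a hA1
      · exact b
    obtain ⟨s0, hs0S, hs0D1⟩ := bdry D1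
    by_cases hB2 : AdjTo G s0 D2
    · have hs0nD3 : ¬ AdjTo G s0 D3 := fun h => claw3 s0 D1 D2 D3 h12 h13 h23 hs0D1 hB2 h
      exact endgame hlf hclaw hbull h12.symm h23 h13 i2 hs0S ht0S hB2 hs0D1 hs0nD3 ht0D2
        ht0D3 hA1
    · have hs0D3 : AdjTo G s0 D3 := by
        rcases pairTwo s0 hs0S with ⟨_, b⟩ | ⟨_, b⟩ | ⟨a, _⟩
        · exact absurd b hB2
        · exact b
        · exact absurd a hB2
      exact endgame hlf hclaw hbull h13.symm h23.symm h12 i3 hs0S ht0S hs0D3 hs0D1 hB2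
        ht0D3 ht0D2 hA1

end Aux

theorem stmt10 {V : Type u} (G : SimpleGraph V)
    (hlf : ∀ v : V, (G.neighborSet v).Finite) (hconn : G.Connected)
    (hclaw : IsEmpty (claw ↪g G)) (hbull : IsEmpty (bull ↪g G)) :
    ∀ e₁ e₂ e₃ : G.end, e₁ = e₂ ∨ e₁ = e₃ ∨ e₂ = e₃ := by
  classical
  intro e₁ e₂ e₃
  by_contra hcon
  push_neg at hcon
  obtain ⟨h12, h13, h23⟩ := hcon
  have getK : ∀ (a b : G.end), a ≠ b →
      ∃ K : Finset V, a.val (Opposite.op K) ≠ b.val (Opposite.op K) := by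
    intro a b hab
    by_contra h
    push_neg at h
    refine hab (Subtype.ext (funext fun K => ?_))
    have := h K.unop
    rwa [Opposite.op_unop] at this
  obtain ⟨K12, hK12⟩ := getK e₁ e₂ h12
  obtain ⟨K13, hK13⟩ := getK e₁ e₃ h13
  obtain ⟨K23, hK23⟩ := getK e₂ e₃ h23
  obtain ⟨K, sub12, sub13, sub23⟩ : ∃ K : Finset V, K12 ≤ K ∧ K13 ≤ K ∧ K23 ≤ K :=
    ⟨K12 ∪ K13 ∪ K23, le_trans le_sup_left le_sup_left,
      le_trans le_sup_right le_sup_left, le_sup_right⟩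
  have dist : ∀ (a b : G.end) (L : Finset V) (hL : L ≤ K),
      a.val (Opposite.op L) ≠ b.val (Opposite.op L) →
      a.val (Opposite.op K) ≠ b.val (Opposite.op K) := by
    intro a b L hL hne h
    have ha := a.prop (CategoryTheory.opHomOfLE hL)
    have hb := b.prop (CategoryTheory.opHomOfLE hL)
    refine hne ?_
    rw [← ha, ← hb, h]
  have inf : ∀ (e : G.end), (e.val (Opposite.op K)).supp.Infinite := by
    intro e
    refine (SimpleGraph.ComponentCompl.infinite_iff_in_all_ranges (K := K) (e.val (Opposite.op K))).mpr ?_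
    intro L hKL
    have := e.prop (CategoryTheory.opHomOfLE hKL)
    rw [SimpleGraph.componentComplFunctor_map] at this
    exact ⟨e.val (Opposite.op L), this⟩
  exact no_three_inf hlf hconn hclaw hbull K.card K rfl
    (e₁.val (Opposite.op K)) (e₂.val (Opposite.op K)) (e₃.val (Opposite.op K))
    (dist e₁ e₂ K12 sub12 hK12) (dist e₁ e₃ K13 sub13 hK13) (dist e₂ e₃ K23 sub23 hK23)
    (inf e₁) (inf e₂) (inf e₃)
end

section
/- Let G be a locally finite, connected, claw-free and net-free graph with exactly two ends, and let D be a geodetic double ray in G containing a ray to each of the two ends. Then every vertex of G is at distance at most 1 from D. -/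
open SimpleGraph

universe u

section Aux

instance : DecidableRel net.Adj := fun a b =>
  decidable_of_iff' _ (SimpleGraph.fromRel_adj _ a b)

/-- Build a claw embedding from explicit data. -/
def mkClaw {V : Type u} {G : SimpleGraph V} (c a b d : V)
    (hca : G.Adj c a) (hcb : G.Adj c b) (hcd : G.Adj c d)
    (hab : ¬ G.Adj a b) (had : ¬ G.Adj a d) (hbd : ¬ G.Adj b d)
    (nab : a ≠ b) (nad : a ≠ d) (nbd : b ≠ d) : claw ↪g G := by
  have hca' := hca.ne
  have hcb' := hcb.ne
  have hcd' := hcd.ne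
  have hab' : ¬ G.Adj b a := fun h => hab h.symm
  have had' : ¬ G.Adj d a := fun h => had h.symm
  have hbd' : ¬ G.Adj d b := fun h => hbd h.symm
  have hca2 := hca.symm
  have hcb2 := hcb.symm
  have hcd2 := hcd.symm
  refine ⟨⟨![c,a,b,d], ?_⟩, ?_⟩
  · intro i j hij
    fin_cases i <;> fin_cases j <;> simp_all
  · intro i j
    show G.Adj (![c,a,b,d] i) (![c,a,b,d] j) ↔ claw.Adj i j
    fin_cases i <;> fin_cases j <;>
      simp_all [claw, SimpleGraph.fromRel_adj]

/-- Build a net embedding from explicit data. -/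
def mkNet {V : Type u} {G : SimpleGraph V} (t0 t1 t2 p0 p1 p2 : V)
    (a01 : G.Adj t0 t1) (a02 : G.Adj t0 t2) (a12 : G.Adj t1 t2)
    (b0 : G.Adj t0 p0) (b1 : G.Adj t1 p1) (b2 : G.Adj t2 p2)
    (n01 : ¬ G.Adj t0 p1) (n02 : ¬ G.Adj t0 p2)
    (n10 : ¬ G.Adj t1 p0) (n12 : ¬ G.Adj t1 p2)
    (n20 : ¬ G.Adj t2 p0) (n21 : ¬ G.Adj t2 p1)
    (q01 : ¬ G.Adj p0 p1) (q02 : ¬ G.Adj p0 p2) (q12 : ¬ G.Adj p1 p2)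
    (e01 : t0 ≠ p1) (e02 : t0 ≠ p2) (e10 : t1 ≠ p0) (e12 : t1 ≠ p2)
    (e20 : t2 ≠ p0) (e21 : t2 ≠ p1)
    (d01 : p0 ≠ p1) (d02 : p0 ≠ p2) (d12 : p1 ≠ p2) : net ↪g G := by
  have := a01.ne; have := a02.ne; have := a12.ne
  have := b0.ne; have := b1.ne; have := b2.ne
  have := a01.symm; have := a02.symm; have := a12.symm
  have := b0.symm; have := b1.symm; have := b2.symm
  have : ¬ G.Adj p1 t0 := fun h => n01 h.symm
  have : ¬ G.Adj p2 t0 := fun h => n02 h.symm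
  have : ¬ G.Adj p0 t1 := fun h => n10 h.symm
  have : ¬ G.Adj p2 t1 := fun h => n12 h.symm
  have : ¬ G.Adj p0 t2 := fun h => n20 h.symm
  have : ¬ G.Adj p1 t2 := fun h => n21 h.symm
  have : ¬ G.Adj p1 p0 := fun h => q01 h.symm
  have : ¬ G.Adj p2 p0 := fun h => q02 h.symm
  have : ¬ G.Adj p2 p1 := fun h => q12 h.symm
  have v0 : (![t0,t1,t2,p0,p1,p2] : Fin 6 → V) 0 = t0 := rfl
  have v1 : (![t0,t1,t2,p0,p1,p2] : Fin 6 → V) 1 = t1 := rfl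
  have v2 : (![t0,t1,t2,p0,p1,p2] : Fin 6 → V) 2 = t2 := rfl
  have v3 : (![t0,t1,t2,p0,p1,p2] : Fin 6 → V) 3 = p0 := rfl
  have v4 : (![t0,t1,t2,p0,p1,p2] : Fin 6 → V) 4 = p1 := rfl
  have v5 : (![t0,t1,t2,p0,p1,p2] : Fin 6 → V) 5 = p2 := rfl
  refine ⟨⟨![t0,t1,t2,p0,p1,p2], ?_⟩, ?_⟩
  · intro i j hij
    fin_cases i <;> fin_cases j <;>
      simp only [v0,v1,v2,v3,v4,v5] at hij ⊢ <;>
      first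
        | rfl
        | exact absurd hij (by assumption)
        | exact absurd hij.symm (by assumption)
  · intro i j
    show G.Adj ((![t0,t1,t2,p0,p1,p2] : Fin 6 → V) i) ((![t0,t1,t2,p0,p1,p2] : Fin 6 → V) j) ↔ net.Adj i j
    fin_cases i <;> fin_cases j <;>
      simp only [v0,v1,v2,v3,v4,v5] <;>
      first
        | exact iff_of_true (by assumption) (by decide)
        | exact iff_of_false (by assumption) (by decide)
        | exact iff_of_false (G.loopless.irrefl _) (by decide)

end Aux

theorem stmt11 {V : Type u} (G : SimpleGraph V)
    (hlf : ∀ v : V, (G.neighborSet v).Finite) (hconn : G.Connected)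
    (hclaw : IsEmpty (claw ↪g G)) (hnet : IsEmpty (net ↪g G))
    (e₁ e₂ : G.end) (hne : e₁ ≠ e₂) (hall : ∀ e : G.end, e = e₁ ∨ e = e₂)
    (f : ℤ → V) (hD : IsDoubleRay G f)
    (hgeo : ∀ m n : ℤ, G.dist (f m) (f n) = (m - n).natAbs)
    (h₁ : RayTo G (fun n : ℕ => f (n : ℤ)) e₁)
    (h₂ : RayTo G (fun n : ℕ => f (-(n : ℤ))) e₂) :
    ∀ v : V, ∃ m : ℤ, G.dist v (f m) ≤ 1 := by
  classical
  have hadj : ∀ a b : ℤ, G.Adj (f a) (f b) ↔ (a - b).natAbs = 1 := by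
    intro a b
    rw [← SimpleGraph.dist_eq_one_iff_adj, hgeo]
  have hadj' : ∀ a b : ℤ, (a - b).natAbs = 1 → G.Adj (f a) (f b) :=
    fun a b h => (hadj a b).2 h
  have hnadj : ∀ a b : ℤ, (a - b).natAbs ≠ 1 → ¬ G.Adj (f a) (f b) :=
    fun a b h hd => h ((hadj a b).1 hd)
  have hfne : ∀ a b : ℤ, a ≠ b → f a ≠ f b := fun a b h e => h (hD.1 e)
  have key : ∀ (w u : V) (m : ℤ), G.Adj w u → G.Adj u (f m) →
      (∀ k, ¬ G.Adj w (f k)) → (∀ k, w ≠ f k) → (∀ k, u ≠ f k) → False := by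
    intro w u m hwu hum hwadj hwne hune
    have clawU : ∀ k : ℤ, G.Adj u (f (k-1)) → G.Adj u (f (k+1)) → False := by
      intro k hk1 hk2
      exact hclaw.false (mkClaw u (f (k-1)) (f (k+1)) w hk1 hk2 hwu.symm
        (hnadj _ _ (by omega)) (fun h => hwadj _ h.symm) (fun h => hwadj _ h.symm)
        (hfne _ _ (by omega)) (fun h => hwne _ h.symm) (fun h => hwne _ h.symm))
    have netC : ∀ ε : ℤ, ε.natAbs = 1 → G.Adj u (f (m+ε)) → ¬ G.Adj u (f (m-ε)) →
        ¬ G.Adj u (f (m+2*ε)) → False := by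
      intro ε hε hU1 hU2 hU3
      exact hnet.false (mkNet u (f m) (f (m+ε)) w (f (m-ε)) (f (m+2*ε))
        hum hU1 (hadj' _ _ (by omega))
        hwu.symm (hadj' _ _ (by omega)) (hadj' _ _ (by omega))
        hU2 hU3
        (fun h => hwadj _ h.symm) (hnadj _ _ (by omega))
        (fun h => hwadj _ h.symm) (hnadj _ _ (by omega))
        (hwadj _) (hwadj _) (hnadj _ _ (by omega))
        (hune _) (hune _)
        (fun h => hwne _ h.symm) (hfne _ _ (by omega))
        (fun h => hwne _ h.symm) (hfne _ _ (by omega))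
        (hwne _) (hwne _) (hfne _ _ (by omega)))
    by_cases h1 : G.Adj u (f (m+1))
    · by_cases h3 : G.Adj u (f (m-1))
      · exact clawU m h3 h1
      · by_cases h4 : G.Adj u (f (m+2))
        · exact clawU (m+1) (by rw [show m+1-1 = m by ring]; exact hum)
            (by rw [show m+1+1 = m+2 by ring]; exact h4)
        · exact netC 1 rfl h1 h3 (by rw [show m+2*1 = m+2 by ring]; exact h4)
    · by_cases h3 : G.Adj u (f (m-1))
      · by_cases h4 : G.Adj u (f (m-2))
        · exact clawU (m-1) (by rw [show m-1-1 = m-2 by ring]; exact h4)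
            (by rw [show m-1+1 = m by ring]; exact hum)
        · exact netC (-1) (by decide) (by rw [show m+(-1) = m-1 by ring]; exact h3)
            (by rw [show m-(-1) = m+1 by ring]; exact h1)
            (by rw [show m+2*(-1) = m-2 by ring]; exact h4)
      · exact hclaw.false (mkClaw (f m) (f (m-1)) (f (m+1)) u
          (hadj' _ _ (by omega)) (hadj' _ _ (by omega)) hum.symm
          (hnadj _ _ (by omega)) (fun h => h3 h.symm) (fun h => h1 h.symm)
          (hfne _ _ (by omega)) (fun h => hune _ h.symm) (fun h => hune _ h.symm))
  intro v
  by_contra hbad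
  push_neg at hbad
  have hSne : {n : ℕ | ∃ x : V, (∀ m : ℤ, 1 < G.dist x (f m)) ∧ G.dist x (f 0) = n}.Nonempty :=
    ⟨_, v, hbad, rfl⟩
  obtain ⟨w0, hw0B, hw0d⟩ := Nat.sInf_mem hSne
  have hd2 : 1 < G.dist w0 (f 0) := hw0B 0
  obtain ⟨p, hp⟩ := (hconn.preconnected w0 (f 0)).exists_walk_length_eq_dist
  cases p with
  | nil => simp at hp; simp at hd2
  | cons hadjwu q =>
    rename_i u
    simp only [SimpleGraph.Walk.length_cons] at hp
    have hqd := SimpleGraph.dist_le q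
    have hu_not : ¬ ∀ m : ℤ, 1 < G.dist u (f m) := by
      intro huB
      have hle : sInf {n : ℕ | ∃ x : V, (∀ m : ℤ, 1 < G.dist x (f m)) ∧ G.dist x (f 0) = n}
          ≤ G.dist u (f 0) := Nat.sInf_le ⟨u, huB, rfl⟩
      omega
    push_neg at hu_not
    obtain ⟨m, hm⟩ := hu_not
    have hw0adj : ∀ k : ℤ, ¬ G.Adj w0 (f k) := by
      intro k h
      have h1 := SimpleGraph.dist_eq_one_iff_adj.mpr h
      have := hw0B k
      omega
    rcases Nat.le_one_iff_eq_zero_or_eq_one.mp hm with h0 | h1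
    · have heq : u = f m := hconn.dist_eq_zero_iff.mp h0
      exact hw0adj m (heq ▸ hadjwu)
    · have humadj : G.Adj u (f m) := SimpleGraph.dist_eq_one_iff_adj.mp h1
      have hw0ne : ∀ k : ℤ, w0 ≠ f k := by
        intro k h
        have : G.dist w0 (f k) = 0 := by rw [h]; exact SimpleGraph.dist_self
        have := hw0B k
        omega
      have hune : ∀ k : ℤ, u ≠ f k := fun k h => hw0adj k (h ▸ hadjwu)
      exact key w0 u m hadjwu humadj hw0adj hw0ne hune
end
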